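/- The sequence of random vectors generated by the three-level enriched Polya urn scheme is exchangeable: the joint probability of any finite sequence of outcomes is invariant under permutations of the sequence. -/
import Mathlib


open Finset

/-- Number of occurrences of the value `b` among the first `t` draws of `seq`. -/
def urnCount {n : ℕ} {β : Type*} [DecidableEq β] (seq : Fin n → β) (t : ℕ) (b : β) : ℕ :=
  (Finset.univ.filter (fun h : Fin n => h.val < t ∧ seq h = b)).card

/-- Joint probability of the first `n` outcomes of the three-level enriched Polya
urn scheme: the product over draws of the sequential predictive probabilities
(product of three ratios). -/
noncomputable def enrichedPolyaJointProb (k r s n : ℕ) (α : Fin k → ℝ) (μ : Fin r → Fin k → ℝ)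
    (γ : Fin s → Fin r → Fin k → ℝ) (seq : Fin n → Fin k × Fin r × Fin s) : ℝ :=
  ∏ t : Fin n,
    ((α (seq t).1 + (urnCount (fun h => (seq h).1) t.val (seq t).1 : ℝ)) / ((∑ i, α i) + t.val)
      * ((μ (seq t).2.1 (seq t).1 +
            (urnCount (fun h => ((seq h).1, (seq h).2.1)) t.val ((seq t).1, (seq t).2.1) : ℝ))
          / ((∑ j, μ j (seq t).1) + (urnCount (fun h => (seq h).1) t.val (seq t).1 : ℝ)))
      * ((γ (seq t).2.2 (seq t).2.1 (seq t).1 + (urnCount seq t.val (seq t) : ℝ))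
          / ((∑ l, γ l (seq t).2.1 (seq t).1) +
              (urnCount (fun h => ((seq h).1, (seq h).2.1)) t.val ((seq t).1, (seq t).2.1) : ℝ))))

section aux
variable {n : ℕ} {β : Type*} [DecidableEq β]

lemma urnCount_strict (v : Fin n → β) (i : Fin n) (t : ℕ) (b : β)
    (hit : i.val < t) (hb : v i = b) : urnCount v i.val b < urnCount v t b := by
  apply Finset.card_lt_card
  rw [Finset.ssubset_iff_of_subset]
  · exact ⟨i, by simp [hit, hb], by simp⟩
  · intro h hh
    simp only [Finset.mem_filter, Finset.mem_univ, true_and] at *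
    exact ⟨hh.1.trans hit, hh.2⟩

lemma urnCount_inj (v : Fin n → β) {i j : Fin n}
    (hv : v i = v j)
    (hc : urnCount v i.val (v i) = urnCount v j.val (v j)) : i = j := by
  rcases lt_trichotomy i.val j.val with h | h | h
  · exact absurd hc (ne_of_lt (hv ▸ urnCount_strict v i j.val (v j) h hv))
  · exact Fin.ext h
  · exact absurd hc.symm (ne_of_lt (hv ▸ urnCount_strict v j i.val (v i) h hv.symm))

lemma urnCount_prod [Fintype β] (v : Fin n → β) (g : β → ℕ → ℝ) :
    ∏ t : Fin n, g (v t) (urnCount v t.val (v t)) =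
      ∏ b : β, ∏ m ∈ Finset.range (urnCount v n b), g b m := by
  rw [← Finset.prod_sigma Finset.univ (fun b => Finset.range (urnCount v n b))
      (fun x => g x.1 x.2)]
  apply Finset.prod_bij (fun (t : Fin n) _ => (⟨v t, urnCount v t.val (v t)⟩ : Σ _ : β, ℕ))
  · intro a _
    simp only [Finset.mem_sigma, Finset.mem_univ, Finset.mem_range, true_and]
    exact urnCount_strict v a n (v a) a.isLt rfl
  · intro a _ b _ hab
    have h1 : v a = v b := congrArg Sigma.fst hab
    have h2 : urnCount v a.val (v a) = urnCount v b.val (v b) :=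
      congrArg (fun x : Σ _ : β, ℕ => x.2) hab
    exact urnCount_inj v h1 h2
  · rintro ⟨b, m⟩ hbm
    simp only [Finset.mem_sigma, Finset.mem_univ, Finset.mem_range, true_and] at hbm
    classical
    set T : Finset (Fin n) := Finset.univ.filter (fun h => v h = b) with hT
    have hcard : urnCount v n b = T.card := by
      unfold urnCount
      congr 1
      apply Finset.filter_congr
      intro x _
      simp [x.isLt]
    have hinj : Set.InjOn (fun i : Fin n => urnCount v i.val b) T := by
      intro x hx y hy hxy
      simp only [hT, Finset.coe_filter, Set.mem_setOf_eq, Finset.mem_univ, true_and] at hx hy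
      exact urnCount_inj v (hx.trans hy.symm) (by rw [hx, hy]; exact hxy)
    have himg : Finset.image (fun i : Fin n => urnCount v i.val b) T = Finset.range T.card := by
      apply Finset.eq_of_subset_of_card_le
      · intro m' hm'
        simp only [Finset.mem_image] at hm'
        obtain ⟨i, hi, rfl⟩ := hm'
        simp only [hT, Finset.mem_filter, Finset.mem_univ, true_and] at hi
        rw [Finset.mem_range, ← hcard]
        exact urnCount_strict v i n b i.isLt hi
      · rw [Finset.card_range, Finset.card_image_of_injOn hinj]
    have hm : m ∈ Finset.image (fun i : Fin n => urnCount v i.val b) T := by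
      rw [himg, Finset.mem_range, ← hcard]; exact hbm
    obtain ⟨i, hiT, him⟩ := Finset.mem_image.mp hm
    simp only [hT, Finset.mem_filter, Finset.mem_univ, true_and] at hiT
    refine ⟨i, Finset.mem_univ i, ?_⟩
    subst hiT
    simp [him]
  · intro a _
    rfl

lemma urnCount_comp_perm (v : Fin n → β) (σ : Equiv.Perm (Fin n)) (b : β) :
    urnCount (fun h => v (σ h)) n b = urnCount v n b := by
  unfold urnCount
  apply Finset.card_bij' (fun a _ => σ a) (fun a _ => σ.symm a) <;>
    simp [Fin.is_lt]

lemma prod_perm_invariant [Fintype β] (v : Fin n → β) (σ : Equiv.Perm (Fin n)) (g : β → ℕ → ℝ) :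
    ∏ t : Fin n, g (v (σ t)) (urnCount (fun h => v (σ h)) t.val (v (σ t))) =
      ∏ t : Fin n, g (v t) (urnCount v t.val (v t)) := by
  rw [urnCount_prod (fun h => v (σ h)) g, urnCount_prod v g]
  exact Finset.prod_congr rfl fun b _ => by rw [urnCount_comp_perm]

end aux

/-- The sequence generated by the three-level enriched Polya urn
scheme is exchangeable: the joint probability of any finite sequence of outcomes
is invariant under permutations of the sequence. -/
theorem enrichedPolya_exchangeable
    (k r s n : ℕ) (α : Fin k → ℝ) (μ : Fin r → Fin k → ℝ) (γ : Fin s → Fin r → Fin k → ℝ)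
    (hα : ∀ i, 0 < α i) (hμ : ∀ j i, 0 < μ j i) (hγ : ∀ l j i, 0 < γ l j i)
    (seq : Fin n → Fin k × Fin r × Fin s) (σ : Equiv.Perm (Fin n)) :
    enrichedPolyaJointProb k r s n α μ γ (seq ∘ σ) =
      enrichedPolyaJointProb k r s n α μ γ seq := by
  have expand : ∀ w : Fin n → Fin k × Fin r × Fin s,
      enrichedPolyaJointProb k r s n α μ γ w =
        (∏ t : Fin n,
            (fun (b : Fin k) (m : ℕ) => α b + (m : ℝ)) ((fun h => (w h).1) t)
              (urnCount (fun h => (w h).1) t.val ((fun h => (w h).1) t))) *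
        (∏ t : Fin n, (((∑ i, α i) + (t.val : ℝ))⁻¹)) *
        (∏ t : Fin n,
            (fun (b : Fin k × Fin r) (m : ℕ) => μ b.2 b.1 + (m : ℝ))
              ((fun h => ((w h).1, (w h).2.1)) t)
              (urnCount (fun h => ((w h).1, (w h).2.1)) t.val
                ((fun h => ((w h).1, (w h).2.1)) t))) *
        (∏ t : Fin n,
            (fun (b : Fin k) (m : ℕ) => ((∑ j, μ j b) + (m : ℝ))⁻¹) ((fun h => (w h).1) t)
              (urnCount (fun h => (w h).1) t.val ((fun h => (w h).1) t))) *
        (∏ t : Fin n,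
            (fun (b : Fin k × Fin r × Fin s) (m : ℕ) => γ b.2.2 b.2.1 b.1 + (m : ℝ)) (w t)
              (urnCount w t.val (w t))) *
        (∏ t : Fin n,
            (fun (b : Fin k × Fin r) (m : ℕ) => ((∑ l, γ l b.2 b.1) + (m : ℝ))⁻¹)
              ((fun h => ((w h).1, (w h).2.1)) t)
              (urnCount (fun h => ((w h).1, (w h).2.1)) t.val
                ((fun h => ((w h).1, (w h).2.1)) t))) := by
    intro w
    unfold enrichedPolyaJointProb
    simp only [div_eq_mul_inv]
    rw [← Finset.prod_mul_distrib, ← Finset.prod_mul_distrib, ← Finset.prod_mul_distrib,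
      ← Finset.prod_mul_distrib, ← Finset.prod_mul_distrib]
    exact Finset.prod_congr rfl fun t _ => by ring
  rw [expand (seq ∘ σ), expand seq]
  have e1 := prod_perm_invariant (fun h => (seq h).1) σ (fun b m => α b + (m : ℝ))
  have e2 := prod_perm_invariant (fun h => ((seq h).1, (seq h).2.1)) σ
    (fun b m => μ b.2 b.1 + (m : ℝ))
  have e3 := prod_perm_invariant (fun h => (seq h).1) σ
    (fun b m => ((∑ j, μ j b) + (m : ℝ))⁻¹)
  have e4 := prod_perm_invariant seq σ (fun b m => γ b.2.2 b.2.1 b.1 + (m : ℝ))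
  have e5 := prod_perm_invariant (fun h => ((seq h).1, (seq h).2.1)) σ
    (fun b m => ((∑ l, γ l b.2 b.1) + (m : ℝ))⁻¹)
  simp only [Function.comp_def] at *
  rw [e1, e2, e3, e4, e5]
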